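/- arXiv:1412.8626 — 9 statements merged into one kernel-verified Lean document; each statement's English description precedes it below -/
import Mathlib

section
/- Let X be a quandle and (S_i)_{i ∈ I} a family of subquandles of X. Then the saturation of the subquandle generated by ⋃_{i ∈ I} S_i equals the subquandle generated by ⋃_{i ∈ I} c_X(S_i), where c_X(S_i) is the saturation of S_i. (The pullback closure operator is fully additive: c_X(⋁_{i} S_i) = ⋁_i c_X(S_i).) -/
open Quandles

/-- The paper's (right-action) quandle operation `x ◃ y`, i.e. Mathlib's `y ◃ x`.
With this convention `x ▷ x = x`, `(x ▷ y) ▷⁻¹ y = x = (x ▷⁻¹ y) ▷ y`, and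
both `▷` and `▷⁻¹` are right self-distributive. -/
def rAct {Q : Type*} [Quandle Q] (x y : Q) : Q := y ◃ x

/-- The paper's (right-action) inverse quandle operation `x ◃⁻¹ y`, i.e. Mathlib's `y ◃⁻¹ x`. -/
def rInvAct {Q : Type*} [Quandle Q] (x y : Q) : Q := y ◃⁻¹ x

local infixl:65 " ▷ " => rAct
local infixl:65 " ▷⁻¹ " => rInvAct

/-- The orbit relation `∼` on a quandle: the equivalence relation generated by the
relation `{(a, b) | ∃ z, a ▷ z = b}`; `x ∼ y` iff `x` and `y` lie in the same
connected component (orbit under the inner automorphism group). -/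
def orbitRel (Q : Type*) [Quandle Q] : Q → Q → Prop :=
  Relation.EqvGen (fun a b => ∃ z : Q, a ▷ z = b)

/-- A subset of a quandle is a subquandle if it is closed under both operations. -/
def IsSubquandle {Q : Type*} [Quandle Q] (S : Set Q) : Prop :=
  ∀ a ∈ S, ∀ b ∈ S, a ▷ b ∈ S ∧ a ▷⁻¹ b ∈ S

/-- The saturation (pullback = regular closure) of a subset `M` of a quandle:
the union of the connected components meeting `M`. -/
def saturation {Q : Type*} [Quandle Q] (M : Set Q) : Set Q :=
  {x | ∃ a ∈ M, orbitRel Q x a}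

/-- The subquandle of `X` generated by a subset `A`: the smallest subquandle containing `A`. -/
def genSubquandle {Q : Type*} [Quandle Q] (A : Set Q) : Set Q :=
  ⋂₀ {V : Set Q | IsSubquandle V ∧ A ⊆ V}

section Aux
variable {Q : Type*} [Quandle Q]

lemma orbit_act (a z : Q) : orbitRel Q a (a ▷ z) :=
  Relation.EqvGen.rel _ _ ⟨z, rfl⟩

lemma orbit_invAct (a z : Q) : orbitRel Q a (a ▷⁻¹ z) :=
  Relation.EqvGen.symm _ _ (Relation.EqvGen.rel _ _ ⟨z, Rack.act_invAct_eq z a⟩)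

lemma saturation_isSubquandle (M : Set Q) : IsSubquandle (saturation M) := by
  rintro a ⟨m, hm, ham⟩ b hb
  exact ⟨⟨m, hm, (Relation.EqvGen.symm _ _ (orbit_act a b)).trans _ _ _ ham⟩,
    ⟨m, hm, (Relation.EqvGen.symm _ _ (orbit_invAct a b)).trans _ _ _ ham⟩⟩

lemma subset_gen (A : Set Q) : A ⊆ genSubquandle A :=
  fun _ hx _ hV => hV.2 hx

lemma gen_subset {A V : Set Q} (hV : IsSubquandle V) (hAV : A ⊆ V) :
    genSubquandle A ⊆ V := fun _ hx => hx V ⟨hV, hAV⟩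

lemma gen_isSubquandle (A : Set Q) : IsSubquandle (genSubquandle A) := by
  intro a ha b hb
  exact ⟨fun V hV => (hV.1 a (ha V hV) b (hb V hV)).1,
    fun V hV => (hV.1 a (ha V hV) b (hb V hV)).2⟩

end Aux

/-- The pullback closure operator is fully additive: for a family of subquandles `Sᵢ`,
the saturation of the subquandle generated by `⋃ᵢ Sᵢ` equals the subquandle generated
by `⋃ᵢ c_X(Sᵢ)`, i.e. `c_X(⋁ᵢ Sᵢ) = ⋁ᵢ c_X(Sᵢ)`. -/
theorem saturation_sup {X : Type*} [Quandle X] {I : Type*} (S : I → Set X)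
    (hS : ∀ i, IsSubquandle (S i)) :
    saturation (genSubquandle (⋃ i, S i)) = genSubquandle (⋃ i, saturation (S i)) := by
  apply Set.Subset.antisymm
  · -- L ⊆ R via the set W
    set R := genSubquandle (⋃ i, saturation (S i)) with hR
    have hW : IsSubquandle {a : X | ∀ x, orbitRel X x a → x ∈ R} := by
      intro a ha b hb
      refine ⟨fun x hx => ha x (hx.trans _ _ _ (Relation.EqvGen.symm _ _ (orbit_act a b))),
        fun x hx => ha x (hx.trans _ _ _ (Relation.EqvGen.symm _ _ (orbit_invAct a b)))⟩
    have hsub : genSubquandle (⋃ i, S i) ⊆ {a : X | ∀ x, orbitRel X x a → x ∈ R} := by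
      apply gen_subset hW
      rintro a ha x hx
      obtain ⟨i, hi⟩ := Set.mem_iUnion.mp ha
      exact subset_gen _ (Set.mem_iUnion.mpr ⟨i, a, hi, hx⟩)
    rintro x ⟨a, ha, hxa⟩
    exact hsub ha x hxa
  · apply gen_subset (saturation_isSubquandle _)
    rintro x hx
    obtain ⟨i, a, ha, hxa⟩ := Set.mem_iUnion.mp hx
    exact ⟨a, subset_gen _ (Set.mem_iUnion.mpr ⟨i, ha⟩), hxa⟩
end

section
/- Let X and Y be quandles, M ⊆ X a subquandle and N ⊆ Y a subquandle, and give X × Y the componentwise quandle structure. Then the saturation of M × N in X × Y equals c_X(M) × c_Y(N), the product of the saturations. (The pullback closure operator is finitely productive.) -/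
open Quandles

local infixl:65 " ▷ " => rAct
local infixl:65 " ▷⁻¹ " => rInvAct

/-- The componentwise quandle structure on a product of quandles. -/
instance prodQuandle {X Y : Type*} [Quandle X] [Quandle Y] : Quandle (X × Y) where
  act p q := (p.1 ◃ q.1, p.2 ◃ q.2)
  self_distrib := by intro x y z; ext <;> exact Shelf.self_distrib
  invAct p q := (p.1 ◃⁻¹ q.1, p.2 ◃⁻¹ q.2)
  left_inv := by intro x y; ext <;> exact Rack.invAct_act_eq _ _
  right_inv := by intro x y; ext <;> exact Rack.act_invAct_eq _ _
  fix := by intro x; ext <;> exact Quandle.fix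


lemma orbit_fst {X Y : Type*} [Quandle X] [Quandle Y] {p q : X × Y}
    (h : orbitRel (X × Y) p q) : orbitRel X p.1 q.1 := by
  induction h with
  | rel a b h => obtain ⟨z, hz⟩ := h; exact .rel _ _ ⟨z.1, congrArg Prod.fst hz⟩
  | refl a => exact .refl _
  | symm _ _ _ ih => exact .symm _ _ ih
  | trans _ _ _ _ _ ih1 ih2 => exact .trans _ _ _ ih1 ih2

lemma orbit_snd {X Y : Type*} [Quandle X] [Quandle Y] {p q : X × Y}
    (h : orbitRel (X × Y) p q) : orbitRel Y p.2 q.2 := by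
  induction h with
  | rel a b h => obtain ⟨z, hz⟩ := h; exact .rel _ _ ⟨z.2, congrArg Prod.snd hz⟩
  | refl a => exact .refl _
  | symm _ _ _ ih => exact .symm _ _ ih
  | trans _ _ _ _ _ ih1 ih2 => exact .trans _ _ _ ih1 ih2

lemma orbit_lift_fst {X Y : Type*} [Quandle X] [Quandle Y] {x a : X} (y : Y)
    (h : orbitRel X x a) : orbitRel (X × Y) (x, y) (a, y) := by
  induction h with
  | rel u v h => obtain ⟨z, hz⟩ := h; exact .rel _ _ ⟨(z, y), Prod.ext hz Quandle.fix⟩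
  | refl a => exact .refl _
  | symm _ _ _ ih => exact .symm _ _ ih
  | trans _ b _ _ _ ih1 ih2 => exact .trans _ (b, y) _ ih1 ih2

lemma orbit_lift_snd {X Y : Type*} [Quandle X] [Quandle Y] {y b : Y} (x : X)
    (h : orbitRel Y y b) : orbitRel (X × Y) (x, y) (x, b) := by
  induction h with
  | rel u v h => obtain ⟨z, hz⟩ := h; exact .rel _ _ ⟨(x, z), Prod.ext Quandle.fix hz⟩
  | refl a => exact .refl _
  | symm _ _ _ ih => exact .symm _ _ ih
  | trans _ c _ _ _ ih1 ih2 => exact .trans _ (x, c) _ ih1 ih2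

/-- The pullback closure operator is finitely productive: for subquandles `M ⊆ X` and
`N ⊆ Y`, the saturation of `M × N` in the product quandle `X × Y` is the product of
the saturations. -/
theorem saturation_prod {X Y : Type*} [Quandle X] [Quandle Y]
    (M : Set X) (N : Set Y) (hM : IsSubquandle M) (hN : IsSubquandle N) :
    saturation (M ×ˢ N) = saturation M ×ˢ saturation N := by
  ext ⟨x, y⟩
  constructor
  · rintro ⟨⟨a, b⟩, ⟨ha, hb⟩, h⟩
    exact ⟨⟨a, ha, orbit_fst h⟩, ⟨b, hb, orbit_snd h⟩⟩
  · rintro ⟨⟨a, ha, hxa⟩, ⟨b, hb, hyb⟩⟩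
    exact ⟨(a, b), ⟨ha, hb⟩, .trans _ (a, y) _ (orbit_lift_fst y hxa) (orbit_lift_snd a hyb)⟩
end

section
/- Let f : X → Y be a surjective quandle homomorphism and M ⊆ X a subquandle. Then f(c_X(M)) = c_Y(f(M)): the image under f of the saturation of M equals the saturation of the image f(M). -/
open Quandles

local infixl:65 " ▷ " => rAct
local infixl:65 " ▷⁻¹ " => rInvAct

lemma map_invAct' {X Y : Type*} [Quandle X] [Quandle Y] (f : X →◃ Y) (x y : X) :
    f (x ◃⁻¹ y) = f x ◃⁻¹ f y := by
  have h := Rack.left_inv (f x) (f (x ◃⁻¹ y))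
  rw [← ShelfHom.map_act, Rack.right_inv] at h
  exact h.symm

/-- For a surjective quandle homomorphism `f : X → Y` and a subquandle `M ⊆ X`,
the image of the saturation of `M` is the saturation of the image:
`f(c_X(M)) = c_Y(f(M))`. -/
theorem image_saturation {X Y : Type*} [Quandle X] [Quandle Y]
    (f : X →◃ Y) (hf : Function.Surjective f)
    (M : Set X) (hM : IsSubquandle M) :
    f '' saturation M = saturation (f '' M) := by
  have fwd : ∀ u v : X, orbitRel X u v → orbitRel Y (f u) (f v) := by
    intro u v h
    induction h with
    | rel u v h =>
      obtain ⟨z, hz⟩ := h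
      refine Relation.EqvGen.rel _ _ ⟨f z, ?_⟩
      rw [← hz]
      exact (ShelfHom.map_act f).symm
    | refl u => exact Relation.EqvGen.refl _
    | symm u v _ ih => exact Relation.EqvGen.symm _ _ ih
    | trans u v w _ _ ih1 ih2 => exact Relation.EqvGen.trans _ _ _ ih1 ih2
  ext y
  constructor
  · rintro ⟨x, ⟨a, haM, hxa⟩, rfl⟩
    exact ⟨f a, ⟨a, haM, rfl⟩, fwd x a hxa⟩
  · rintro ⟨b, ⟨a, haM, rfl⟩, hyb⟩
    have key : ∀ y1 y2 : Y, orbitRel Y y1 y2 →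
        (∀ x2 : X, f x2 = y2 → ∃ x1 : X, f x1 = y1 ∧ orbitRel X x1 x2) ∧
        (∀ x1 : X, f x1 = y1 → ∃ x2 : X, f x2 = y2 ∧ orbitRel X x1 x2) := by
      intro y1 y2 h
      induction h with
      | rel u v h =>
        obtain ⟨z, hz⟩ := h
        obtain ⟨w, hw⟩ := hf z
        constructor
        · intro x2 hx2
          refine ⟨x2 ▷⁻¹ w, ?_, Relation.EqvGen.rel _ _
            ⟨w, Rack.right_inv w x2⟩⟩
          have h1 : f (x2 ▷⁻¹ w) = v ▷⁻¹ z := by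
            simp only [rInvAct, map_invAct', hx2, hw]
          rw [h1, ← hz]
          exact Rack.left_inv z u
        · intro x1 hx1
          refine ⟨x1 ▷ w, ?_, Relation.EqvGen.rel _ _ ⟨w, rfl⟩⟩
          rw [← hz]
          simp only [rAct, ShelfHom.map_act, hx1, hw]
      | refl u =>
        exact ⟨fun x2 hx2 => ⟨x2, hx2, Relation.EqvGen.refl _⟩,
          fun x1 hx1 => ⟨x1, hx1, Relation.EqvGen.refl _⟩⟩
      | symm u v h ih =>
        exact ⟨fun x2 hx2 => (ih.2 x2 hx2).imp fun x ⟨h1, h2⟩ =>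
            ⟨h1, Relation.EqvGen.symm _ _ h2⟩,
          fun x1 hx1 => (ih.1 x1 hx1).imp fun x ⟨h1, h2⟩ =>
            ⟨h1, Relation.EqvGen.symm _ _ h2⟩⟩
      | trans u v w h1 h2 ih1 ih2 =>
        constructor
        · intro x2 hx2
          obtain ⟨xv, hxv, hrv⟩ := ih2.1 x2 hx2
          obtain ⟨x1, hx1, hr1⟩ := ih1.1 xv hxv
          exact ⟨x1, hx1, Relation.EqvGen.trans _ _ _ hr1 hrv⟩
        · intro x1 hx1
          obtain ⟨xv, hxv, hrv⟩ := ih1.2 x1 hx1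
          obtain ⟨x2, hx2, hr2⟩ := ih2.2 xv hxv
          exact ⟨x2, hx2, Relation.EqvGen.trans _ _ _ hrv hr2⟩
    obtain ⟨x, hx, hrel⟩ := (key y (f a) hyb).1 a rfl
    exact ⟨x, ⟨a, haM, hrel⟩, hx⟩
end

section
/- A quandle X is algebraically connected (x ∼ y for all x, y ∈ X) if and only if for every trivial quandle T (a quandle with a ◃ b = a for all a, b) and every quandle homomorphism f : X → T, f is constant, i.e. f(a) = f(b) for all a, b ∈ X. (The connectedness l(Qnd*) associated with the trivial quandles is exactly the class of connected quandles.) -/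
open Quandles

local infixl:65 " ▷ " => rAct
local infixl:65 " ▷⁻¹ " => rInvAct

def orbitSetoid (Q : Type u) [Quandle Q] : Setoid Q :=
  ⟨orbitRel Q, Relation.EqvGen.is_equivalence _⟩

instance trivQuandle (Q : Type u) [Quandle Q] : Quandle (Quotient (orbitSetoid Q)) where
  act _ y := y
  self_distrib := rfl
  invAct _ y := y
  left_inv _ := fun _ => rfl
  right_inv _ := fun _ => rfl
  fix := rfl

/-- A quandle `X` is algebraically connected iff every quandle homomorphism from `X`
to a trivial quandle is constant (the connectedness associated with the trivial
quandles is the class of connected quandles). -/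
theorem connected_iff_hom_to_trivial_constant {X : Type u} [Quandle X] :
    (∀ x y : X, orbitRel X x y) ↔
      (∀ (T : Type u) [Quandle T], (∀ a b : T, a ▷ b = a) →
        ∀ f : X →◃ T, ∀ a b : X, f a = f b) := by
  constructor
  · intro h T _ hT f a b
    induction h a b with
    | rel x y hxy =>
        obtain ⟨z, hz⟩ := hxy
        have := f.map_act (x := z) (y := x)
        rw [show z ◃ x = y from hz] at this
        rw [this]; exact (hT (f x) (f z)).symm
    | refl => rfl
    | symm _ _ _ ih => exact ih.symm
    | trans _ _ _ _ _ ih1 ih2 => exact ih1.trans ih2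
  · intro h x y
    let f : X →◃ Quotient (orbitSetoid X) :=
      { toFun := Quotient.mk _
        map_act' := by
          intro a b
          show _ = Quotient.mk _ b
          exact Quotient.sound (Relation.EqvGen.symm _ _
            (Relation.EqvGen.rel b (a ◃ b) ⟨a, rfl⟩))
      }
    have := h _ (fun _ _ => by unfold rAct; rfl) f x y
    exact Quotient.exact this
end

section
/- A quandle X is algebraically connected if and only if for every quandle Z having no non-trivial connected subquandles (every connected subquandle of Z has at most one element) and every quandle homomorphism f : X → Z, f is constant. (The class of connected quandles is a connectedness: Y = l(Z) = l(r(Y)).) -/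
open Quandles

local infixl:65 " ▷ " => rAct
local infixl:65 " ▷⁻¹ " => rInvAct

/-- The induced quandle structure on a subquandle. -/
def inducedQuandle {Q : Type*} [Quandle Q] {S : Set Q} (h : IsSubquandle S) :
    Quandle S where
  act a b := ⟨(a : Q) ◃ (b : Q), (h b b.2 a a.2).1⟩
  self_distrib := by intro x y z; exact Subtype.ext Shelf.self_distrib
  invAct a b := ⟨(a : Q) ◃⁻¹ (b : Q), (h b b.2 a a.2).2⟩
  left_inv := by intro x y; exact Subtype.ext (Rack.invAct_act_eq _ _)
  right_inv := by intro x y; exact Subtype.ext (Rack.act_invAct_eq _ _)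
  fix := by intro x; exact Subtype.ext Quandle.fix

/-- A subset `S` of a quandle is a connected subquandle if it is a subquandle and
the induced quandle structure on `S` is algebraically connected. -/
def IsConnectedSubquandle {Q : Type*} [Quandle Q] (S : Set Q) : Prop :=
  ∃ h : IsSubquandle S, ∀ a b : S, @orbitRel S (inducedQuandle h) a b

/-- A quandle `X` is algebraically connected iff every quandle homomorphism from `X` to
a quandle with no non-trivial connected subquandles is constant (the class of connected
quandles is a connectedness: `Y = l(Z) = l(r(Y))`). -/
theorem connected_iff_hom_to_disconnected_constant {X : Type u} [Quandle X] :
    (∀ x y : X, orbitRel X x y) ↔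
      (∀ (Z : Type u) [Quandle Z],
        (∀ S : Set Z, IsConnectedSubquandle S → S.Subsingleton) →
        ∀ f : X →◃ Z, ∀ a b : X, f a = f b) := by
  constructor
  · intro hconn Z _ hZ f a b
    have hsub : IsSubquandle (Set.range f) := by
      rintro _ ⟨x, rfl⟩ _ ⟨y, rfl⟩
      exact ⟨⟨y ◃ x, f.map_act⟩, ⟨y ◃⁻¹ x, by
        show f (y ◃⁻¹ x) = f y ◃⁻¹ f x
        have h1 : f y ◃ f (y ◃⁻¹ x) = f x := by
          rw [← f.map_act, Rack.act_invAct_eq]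
        rw [← h1, Rack.invAct_act_eq]⟩⟩
    have hc : ∀ p q : Set.range f, @orbitRel _ (inducedQuandle hsub) p q := by
      have key : ∀ x y : X, orbitRel X x y →
          @orbitRel _ (inducedQuandle hsub) ⟨f x, ⟨x, rfl⟩⟩ ⟨f y, ⟨y, rfl⟩⟩ := by
        intro x y hxy
        induction hxy with
        | rel x y hr =>
            obtain ⟨z, hz⟩ := hr
            refine Relation.EqvGen.rel _ _ ⟨⟨f z, ⟨z, rfl⟩⟩, Subtype.ext ?_⟩
            show f z ◃ f x = f y
            rw [← f.map_act]
            exact congrArg f hz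
        | refl x => exact Relation.EqvGen.refl _
        | symm x y _ ih => exact Relation.EqvGen.symm _ _ ih
        | trans x y z _ _ ih1 ih2 => exact Relation.EqvGen.trans _ _ _ ih1 ih2
      rintro ⟨_, x, rfl⟩ ⟨_, y, rfl⟩
      exact key x y (hconn x y)
    exact hZ (Set.range f) ⟨hsub, hc⟩ ⟨a, rfl⟩ ⟨b, rfl⟩
  · intro h x y
    letI : Quandle (Quot (orbitRel X)) :=
      { act := fun _ b => b
        self_distrib := fun {_ _ _} => rfl
        invAct := fun _ b => b
        left_inv := fun _ _ => rfl
        right_inv := fun _ _ => rfl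
        fix := fun {_} => rfl }
    have hZ : ∀ S : Set (Quot (orbitRel X)), IsConnectedSubquandle S → S.Subsingleton := by
      rintro S ⟨hs, hc⟩ a ha b hb
      have key : ∀ p q : S, @orbitRel S (inducedQuandle hs) p q →
          (p : Quot (orbitRel X)) = q := by
        intro p q hpq
        induction hpq with
        | rel p q hr =>
            obtain ⟨z, hz⟩ := hr
            exact congrArg Subtype.val hz
        | refl p => rfl
        | symm _ _ _ ih => exact ih.symm
        | trans _ _ _ _ _ ih1 ih2 => exact ih1.trans ih2
      exact key ⟨a, ha⟩ ⟨b, hb⟩ (hc _ _)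
    let f : X →◃ Quot (orbitRel X) :=
      { toFun := Quot.mk _
        map_act' := by
          intro a b
          show Quot.mk _ (a ◃ b) = Quot.mk _ b
          exact Quot.sound (Relation.EqvGen.symm _ _
            (Relation.EqvGen.rel _ _ ⟨a, rfl⟩)) }
    have hfxy : Quot.mk (orbitRel X) x = Quot.mk (orbitRel X) y :=
      h (Quot (orbitRel X)) hZ f x y
    exact ((Relation.EqvGen.is_equivalence _).eqvGen_iff).mp (Quot.eq.mp hfxy)
end

section
/- Let X be a quasi-trivial quandle, i.e. x ◃ y = x whenever y lies in the same connected component as x (y ∼ x). Then every connected subquandle of X has at most one element; in particular every quasi-trivial quandle lies in the disconnectedness associated with the class of connected quandles. -/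
open Quandles

local infixl:65 " ▷ " => rAct
local infixl:65 " ▷⁻¹ " => rInvAct

/-- Every quasi-trivial quandle (`x ◃ y = x` whenever `y ∼ x`) has no non-trivial
connected subquandles; in particular it lies in the disconnectedness associated with
the class of connected quandles. -/
theorem quasiTrivial_no_connected_subquandle {X : Type*} [Quandle X]
    (hqt : ∀ x y : X, orbitRel X y x → x ▷ y = x) :
    ∀ S : Set X, IsConnectedSubquandle S → S.Subsingleton := by
  rintro S ⟨hS, hconn⟩ a ha b hb
  -- Map orbitRel on S to orbitRel on X
  have hmap : ∀ x y : S, @orbitRel S (inducedQuandle hS) x y → orbitRel X x y := by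
    intro x y h
    induction h with
    | rel x y h =>
      obtain ⟨z, hz⟩ := h
      exact Relation.EqvGen.rel _ _ ⟨(z : X), congrArg Subtype.val hz⟩
    | refl x => exact Relation.EqvGen.refl _
    | symm _ _ _ ih => exact Relation.EqvGen.symm _ _ ih
    | trans _ _ _ _ _ ih1 ih2 => exact Relation.EqvGen.trans _ _ _ ih1 ih2
  -- Every single step inside S is trivial
  have key : ∀ x y : S, @orbitRel S (inducedQuandle hS) x y → x = y := by
    intro x y h
    induction h with
    | rel x y h =>
      obtain ⟨z, hz⟩ := h
      have hzx : orbitRel X z x := hmap z x (hconn z x)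
      have : (x : X) ▷ (z : X) = (x : X) := hqt x z hzx
      apply Subtype.ext
      rw [← congrArg Subtype.val hz]
      exact this.symm ▸ rfl
    | refl x => rfl
    | symm _ _ _ ih => exact ih.symm
    | trans _ _ _ _ _ ih1 ih2 => exact ih1.trans ih2
  have := key ⟨a, ha⟩ ⟨b, hb⟩ (hconn _ _)
  exact congrArg Subtype.val this
end

section
/- Let X be a quandle and R a congruence on X. Then R permutes with the orbit congruence ∼: for all x, z ∈ X, (∃ y, R x y ∧ y ∼ z) if and only if (∃ y, x ∼ y ∧ R y z); that is, ∼ ∘ R = R ∘ ∼ as relations. -/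
open Quandles

local infixl:65 " ▷ " => rAct
local infixl:65 " ▷⁻¹ " => rInvAct

/-- A congruence on a quandle: an equivalence relation compatible with both operations. -/
def IsCongruence {Q : Type*} [Quandle Q] (R : Q → Q → Prop) : Prop :=
  Equivalence R ∧
    ∀ a b c d : Q, R a b → R c d → R (a ▷ c) (b ▷ d) ∧ R (a ▷⁻¹ c) (b ▷⁻¹ d)

lemma orbit_act_s14 {Q : Type*} [Quandle Q] (x w : Q) : orbitRel Q x (x ▷ w) :=
  Relation.EqvGen.rel _ _ ⟨w, rfl⟩

lemma orbit_invAct_s14 {Q : Type*} [Quandle Q] (x w : Q) : orbitRel Q x (x ▷⁻¹ w) :=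
  Relation.EqvGen.symm _ _ (Relation.EqvGen.rel _ _ ⟨w, Rack.right_inv w x⟩)

lemma key {X : Type*} [Quandle X] (R : X → X → Prop) (hR : IsCongruence R)
    {y z : X} (h : orbitRel X y z) :
    (∀ x, R x y → ∃ y', orbitRel X x y' ∧ R y' z) ∧
    (∀ x, R x z → ∃ y', orbitRel X x y' ∧ R y' y) := by
  induction h with
  | rel a b hab =>
    obtain ⟨w, hw⟩ := hab
    constructor
    · intro x hx
      exact ⟨x ▷ w, orbit_act_s14 x w, hw ▸ (hR.2 x a w w hx (hR.1.refl w)).1⟩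
    · intro x hx
      refine ⟨x ▷⁻¹ w, orbit_invAct_s14 x w, ?_⟩
      have : b ▷⁻¹ w = a := by
        rw [← hw]; exact Rack.left_inv w a
      exact this ▸ (hR.2 x b w w hx (hR.1.refl w)).2
  | refl a => exact ⟨fun x hx => ⟨x, Relation.EqvGen.refl x, hx⟩,
      fun x hx => ⟨x, Relation.EqvGen.refl x, hx⟩⟩
  | symm a b _ ih => exact ⟨ih.2, ih.1⟩
  | trans a b c _ _ ih1 ih2 =>
    constructor
    · intro x hx
      obtain ⟨y', h1, h2⟩ := ih1.1 x hx
      obtain ⟨y'', h3, h4⟩ := ih2.1 y' h2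
      exact ⟨y'', Relation.EqvGen.trans _ _ _ h1 h3, h4⟩
    · intro x hx
      obtain ⟨y', h1, h2⟩ := ih2.2 x hx
      obtain ⟨y'', h3, h4⟩ := ih1.2 y' h2
      exact ⟨y'', Relation.EqvGen.trans _ _ _ h1 h3, h4⟩

/-- Every congruence `R` on a quandle permutes with the orbit congruence `∼`:
`∼ ∘ R = R ∘ ∼`. -/
theorem congruence_permutes_orbitRel {X : Type*} [Quandle X]
    (R : X → X → Prop) (hR : IsCongruence R) :
    ∀ x z : X, (∃ y, R x y ∧ orbitRel X y z) ↔ (∃ y, orbitRel X x y ∧ R y z) := by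
  intro x z
  constructor
  · rintro ⟨y, hxy, hyz⟩
    exact (key R hR hyz).1 x hxy
  · rintro ⟨y, hxy, hyz⟩
    obtain ⟨y', h1, h2⟩ := (key R hR hxy).2 z (hR.1.symm hyz)
    exact ⟨y', hR.1.symm h2, Relation.EqvGen.symm _ _ h1⟩
end

section
/- Let X be a quandle and R a congruence on X. Then the relation composite R ∘ ∼, given by x (R ∘ ∼) z iff ∃ y, x ∼ y ∧ R y z, is itself a congruence on X, and it is the smallest congruence on X containing both R and ∼. (Hence the effective closure of R corresponding to the reflection of quandles into trivial quandles is c_X(R) = R ∨ ∼_{Inn(X)} = R ∘ ∼_{Inn(X)}.) -/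
open Quandles

local infixl:65 " ▷ " => rAct
local infixl:65 " ▷⁻¹ " => rInvAct

/-- The composite `R ∘ ∼` of a congruence `R` with the orbit congruence:
`x (R ∘ ∼) z` iff `∃ y, x ∼ y ∧ R y z`. -/
def orbComp {X : Type*} [Quandle X] (R : X → X → Prop) : X → X → Prop :=
  fun x z => ∃ y, orbitRel X x y ∧ R y z


lemma orbit_step {X : Type*} [Quandle X] (x u : X) : orbitRel X x (x ▷ u) :=
  Relation.EqvGen.rel _ _ ⟨u, rfl⟩

lemma orbit_step_inv {X : Type*} [Quandle X] (x u : X) : orbitRel X x (x ▷⁻¹ u) := by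
  refine Relation.EqvGen.symm _ _ (Relation.EqvGen.rel _ _ ⟨u, ?_⟩)
  simp [rAct, rInvAct, Rack.right_inv]

lemma orbComm {X : Type*} [Quandle X] {R : X → X → Prop} (hR : IsCongruence R) :
    ∀ y z, orbitRel X y z → ∀ x, (R x y → ∃ w, orbitRel X x w ∧ R w z)
      ∧ (R x z → ∃ w, orbitRel X x w ∧ R w y) := by
  intro y z h
  induction h with
  | rel a b hab =>
    obtain ⟨u, rfl⟩ := hab
    intro x
    constructor
    · intro hx
      exact ⟨x ▷ u, orbit_step x u, (hR.2 x a u u hx (hR.1.refl u)).1⟩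
    · intro hx
      refine ⟨x ▷⁻¹ u, orbit_step_inv x u, ?_⟩
      have := (hR.2 x (a ▷ u) u u hx (hR.1.refl u)).2
      simpa [rAct, rInvAct, Rack.left_inv] using this
  | refl a => exact fun x => ⟨fun hx => ⟨x, Relation.EqvGen.refl x, hx⟩,
      fun hx => ⟨x, Relation.EqvGen.refl x, hx⟩⟩
  | symm a b _ ih => exact fun x => ⟨(ih x).2, (ih x).1⟩
  | trans a b c _ _ ih1 ih2 =>
    intro x
    constructor
    · intro hx
      obtain ⟨w, hw1, hw2⟩ := (ih1 x).1 hx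
      obtain ⟨v, hv1, hv2⟩ := (ih2 w).1 hw2
      exact ⟨v, hw1.trans _ _ _ hv1, hv2⟩
    · intro hx
      obtain ⟨w, hw1, hw2⟩ := (ih2 x).2 hx
      obtain ⟨v, hv1, hv2⟩ := (ih1 w).2 hw2
      exact ⟨v, hw1.trans _ _ _ hv1, hv2⟩

/-- For a congruence `R` on a quandle `X`, the composite `R ∘ ∼` is itself a congruence,
and it is the smallest congruence containing both `R` and `∼`; hence the effective
closure of `R` is `c_X(R) = R ∨ ∼ = R ∘ ∼`. -/
theorem orbComp_is_effective_closure {X : Type*} [Quandle X]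
    (R : X → X → Prop) (hR : IsCongruence R) :
    IsCongruence (orbComp R) ∧
    (∀ x y : X, R x y → orbComp R x y) ∧
    (∀ x y : X, orbitRel X x y → orbComp R x y) ∧
    (∀ T : X → X → Prop, IsCongruence T → (∀ x y, R x y → T x y) →
      (∀ x y, orbitRel X x y → T x y) → ∀ x y, orbComp R x y → T x y) := by
  obtain ⟨hEq, hComp⟩ := hR
  refine ⟨⟨⟨fun x => ⟨x, Relation.EqvGen.refl x, hEq.refl x⟩, ?_, ?_⟩, ?_⟩, ?_, ?_, ?_⟩
  · rintro x z ⟨y, hxy, hyz⟩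
    obtain ⟨w, hw1, hw2⟩ := (orbComm ⟨hEq, hComp⟩ y x (hxy.symm _ _) z).1 (hEq.symm hyz)
    exact ⟨w, hw1, hw2⟩
  · rintro x z x' ⟨y, hxy, hyz⟩ ⟨y', hzy', hy'x'⟩
    obtain ⟨w, hw1, hw2⟩ := (orbComm ⟨hEq, hComp⟩ z y' hzy' y).1 hyz
    exact ⟨w, hxy.trans _ _ _ hw1, hEq.trans hw2 hy'x'⟩
  · rintro a b c d ⟨y, hay, hyb⟩ ⟨y', hcy', hy'd⟩
    have h1 : orbitRel X (a ▷ c) (y ▷ y') :=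
      ((orbit_step a c).symm _ _).trans _ _ _ (hay.trans _ _ _ (orbit_step y y'))
    have h2 : orbitRel X (a ▷⁻¹ c) (y ▷⁻¹ y') :=
      ((orbit_step_inv a c).symm _ _).trans _ _ _ (hay.trans _ _ _ (orbit_step_inv y y'))
    exact ⟨⟨y ▷ y', h1, (hComp y b y' d hyb hy'd).1⟩,
           ⟨y ▷⁻¹ y', h2, (hComp y b y' d hyb hy'd).2⟩⟩
  · exact fun x y h => ⟨x, Relation.EqvGen.refl x, h⟩
  · exact fun x y h => ⟨y, h, hEq.refl y⟩
  · rintro T ⟨hTeq, _⟩ hTR hTo x z ⟨y, hxy, hyz⟩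
    exact hTeq.trans (hTo x y hxy) (hTR y z hyz)
end

section
/- Let X be a quandle and R, S congruences on X. Then the smallest congruence on X containing R, S, and the orbit congruence ∼ equals the smallest congruence on X containing the composites R ∘ ∼ and S ∘ ∼. (The effective closure operator corresponding to the reflection of quandles into trivial quandles satisfies c_X(R ∨ S) = c_X(R) ∨ c_X(S).) -/
open Quandles

local infixl:65 " ▷ " => rAct
local infixl:65 " ▷⁻¹ " => rInvAct

/-- The smallest congruence containing a given relation `A` (the intersection of all
congruences containing `A`). -/
def congGen {X : Type*} [Quandle X] (A : X → X → Prop) : X → X → Prop :=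
  fun x y => ∀ T : X → X → Prop, IsCongruence T → (∀ a b, A a b → T a b) → T x y

/-- The effective closure operator satisfies `c_X(R ∨ S) = c_X(R) ∨ c_X(S)`: the
smallest congruence containing `R`, `S` and the orbit congruence `∼` equals the
smallest congruence containing `R ∘ ∼` and `S ∘ ∼`. -/
theorem effective_closure_join {X : Type*} [Quandle X]
    (R S : X → X → Prop) (hR : IsCongruence R) (hS : IsCongruence S) :
    congGen (fun a b => R a b ∨ S a b ∨ orbitRel X a b) =
      congGen (fun a b => orbComp R a b ∨ orbComp S a b) := by
  funext x y
  apply propext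
  constructor
  · intro h T hT hgen
    apply h T hT
    intro a b hab
    rcases hab with h' | h' | h'
    · exact hgen a b (Or.inl ⟨a, Relation.EqvGen.refl a, h'⟩)
    · exact hgen a b (Or.inr ⟨a, Relation.EqvGen.refl a, h'⟩)
    · exact hgen a b (Or.inl ⟨b, h', hR.1.refl b⟩)
  · intro h T hT hgen
    apply h T hT
    intro a b hab
    rcases hab with ⟨c, hc, hcb⟩ | ⟨c, hc, hcb⟩
    · exact hT.1.trans (hgen a c (Or.inr (Or.inr hc))) (hgen c b (Or.inl hcb))
    · exact hT.1.trans (hgen a c (Or.inr (Or.inr hc))) (hgen c b (Or.inr (Or.inl hcb)))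
end
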